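/- For each n, the set of monic reduced admissible polynomials of degree n is finite; i.e., there are only finitely many z = xⁿ + a₂x^{n−2} + ⋯ + aₙ ∈ ℂ[x] with z' | z² − 1. -/

import Mathlib

open Polynomial MvPolynomial

namespace Admissible

noncomputable section

variable (n : ℕ)

abbrev Sig := Fin (n-1) ⊕ Fin (n+1)

def wt : Sig n → ℕ := Sum.elim (fun i => i.1 + 2) (fun j => n + 1 - j.1)

abbrev Rg := MvPolynomial (Sig n) ℂ

def zc (k : ℕ) : Rg n :=
  if k = n then 1 else
    if h : k ≤ n - 2 ∧ 2 ≤ n then MvPolynomial.X (Sum.inl ⟨n-2-k, by omega⟩) else 0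

def qc (k : ℕ) : Rg n :=
  if k = n + 1 then MvPolynomial.C ((n : ℂ))⁻¹ else
    if h : k ≤ n then MvPolynomial.X (Sum.inr ⟨k, by omega⟩) else 0

def Zg : Polynomial (Rg n) := ∑ k ∈ Finset.range (n+1), Polynomial.monomial k (zc n k)
def Qg : Polynomial (Rg n) := ∑ k ∈ Finset.range (n+2), Polynomial.monomial k (qc n k)
def Eg : Polynomial (Rg n) := Zg n * Zg n - Qg n * Polynomial.derivative (Zg n)

lemma coeff_Zg (k : ℕ) : (Zg n).coeff k = zc n k := by
  rw [Zg, Polynomial.finset_sum_coeff]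
  simp only [Polynomial.coeff_monomial]
  rw [Finset.sum_ite_eq' (Finset.range (n+1)) k]
  split_ifs with h
  · rfl
  · rw [Finset.mem_range, not_lt] at h
    rw [zc, if_neg (by omega), dif_neg (by omega)]

lemma coeff_Qg (k : ℕ) : (Qg n).coeff k = qc n k := by
  rw [Qg, Polynomial.finset_sum_coeff]
  simp only [Polynomial.coeff_monomial]
  rw [Finset.sum_ite_eq' (Finset.range (n+2)) k]
  split_ifs with h
  · rfl
  · rw [Finset.mem_range, not_lt] at h
    rw [qc, if_neg (by omega), dif_neg (by omega)]

def Gr (d : ℕ) (P : Polynomial (Rg n)) : Prop :=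
  ∀ m : ℕ, ((P.coeff m).IsWeightedHomogeneous (wt n) (d - m)) ∧ (d < m → P.coeff m = 0)

lemma Gr.congr_deg {d d' : ℕ} {P : Polynomial (Rg n)} (h : Gr n d P) (hd : d = d') :
    Gr n d' P := hd ▸ h

lemma Gr.mul {d e : ℕ} {P Q : Polynomial (Rg n)} (hP : Gr n d P) (hQ : Gr n e Q) :
    Gr n (d + e) (P * Q) := by
  intro m
  constructor
  · rw [Polynomial.coeff_mul]
    apply MvPolynomial.IsWeightedHomogeneous.sum
    rintro ⟨i, j⟩ hij
    rw [Finset.HasAntidiagonal.mem_antidiagonal] at hij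
    by_cases hi : i ≤ d
    · by_cases hj : j ≤ e
      · have := (hP i).1.mul (hQ j).1
        have he : (d - i) + (e - j) = d + e - m := by omega
        rwa [he] at this
      · rw [(hQ j).2 (by omega), mul_zero]
        exact isWeightedHomogeneous_zero _ _ _
    · rw [(hP i).2 (by omega), zero_mul]
      exact isWeightedHomogeneous_zero _ _ _
  · intro hm
    rw [Polynomial.coeff_mul]
    apply Finset.sum_eq_zero
    rintro ⟨i, j⟩ hij
    rw [Finset.HasAntidiagonal.mem_antidiagonal] at hij
    by_cases hi : i ≤ d
    · rw [(hQ j).2 (by omega), mul_zero]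
    · rw [(hP i).2 (by omega), zero_mul]

lemma Gr.sub {d : ℕ} {P Q : Polynomial (Rg n)} (hP : Gr n d P) (hQ : Gr n d Q) :
    Gr n d (P - Q) := by
  intro m
  refine ⟨?_, fun hm => ?_⟩
  · rw [Polynomial.coeff_sub]
    exact Submodule.sub_mem (weightedHomogeneousSubmodule ℂ (wt n) (d - m)) (hP m).1 (hQ m).1
  · rw [Polynomial.coeff_sub, (hP m).2 hm, (hQ m).2 hm, sub_zero]

lemma Gr.deriv {d : ℕ} {P : Polynomial (Rg n)} (hP : Gr n (d + 1) P) :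
    Gr n d (Polynomial.derivative P) := by
  intro m
  refine ⟨?_, fun hm => ?_⟩
  · rw [Polynomial.coeff_derivative]
    have h0 : MvPolynomial.IsWeightedHomogeneous (wt n) ((m + 1 : ℕ) : Rg n) 0 := by
      rw [← map_natCast (MvPolynomial.C : ℂ →+* Rg n)]
      exact isWeightedHomogeneous_C _ _
    have := (hP (m+1)).1.mul h0
    have he : (d + 1 - (m + 1)) + 0 = d - m := by omega
    rwa [he, Nat.cast_add, Nat.cast_one] at this
  · rw [Polynomial.coeff_derivative, (hP (m+1)).2 (by omega), zero_mul]

lemma Gr_Zg (hn : 2 ≤ n) : Gr n n (Zg n) := by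
  intro m
  rw [coeff_Zg, zc]
  constructor
  · split_ifs with h1 h2
    · rw [h1, Nat.sub_self]
      exact isWeightedHomogeneous_one _ _
    · have := isWeightedHomogeneous_X ℂ (wt n) (Sum.inl ⟨n-2-m, by omega⟩ : Sig n)
      have hw : wt n (Sum.inl ⟨n-2-m, by omega⟩ : Sig n) = n - m := by
        simp only [wt, Sum.elim_inl]
        omega
      rwa [hw] at this
    · exact isWeightedHomogeneous_zero _ _ _
  · intro hm
    rw [if_neg (by omega), dif_neg (by omega)]

lemma Gr_Qg : Gr n (n + 1) (Qg n) := by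
  intro m
  rw [coeff_Qg, qc]
  constructor
  · split_ifs with h1 h2
    · rw [h1, Nat.sub_self]
      exact isWeightedHomogeneous_C _ _
    · have := isWeightedHomogeneous_X ℂ (wt n) (Sum.inr ⟨m, by omega⟩ : Sig n)
      have hw : wt n (Sum.inr ⟨m, by omega⟩ : Sig n) = n + 1 - m := by
        simp only [wt, Sum.elim_inr]
      rwa [hw] at this
    · exact isWeightedHomogeneous_zero _ _ _
  · intro hm
    rw [if_neg (by omega), dif_neg (by omega)]

lemma Gr_Eg (hn : 2 ≤ n) : Gr n (2 * n) (Eg n) := by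
  have h1 : Gr n (n + n) (Zg n * Zg n) := (Gr_Zg n hn).mul n (Gr_Zg n hn)
  have hz : Gr n ((n - 1) + 1) (Zg n) := (Gr_Zg n hn).congr_deg n (by omega)
  have h2 : Gr n ((n + 1) + (n - 1)) (Qg n * Polynomial.derivative (Zg n)) :=
    (Gr_Qg n).mul n (hz.deriv n)
  exact ((h1.congr_deg n (by omega)).sub n (h2.congr_deg n (by omega)))

lemma hom_Eg (hn : 2 ≤ n) (m : ℕ) :
    ((Eg n).coeff m).IsWeightedHomogeneous (wt n) (2 * n - m) := (Gr_Eg n hn m).1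

/-- derivative facts for a monic polynomial of degree n ≥ 1 over ℂ -/
lemma deriv_coeff {z : Polynomial ℂ} (hz : z.Monic) {n : ℕ} (hn : 1 ≤ n)
    (hd : z.natDegree = n) : (Polynomial.derivative z).coeff (n-1) = (n : ℂ) := by
  rw [Polynomial.coeff_derivative]
  have h1 : n - 1 + 1 = n := by omega
  rw [h1]
  have : z.coeff n = 1 := by rw [← hd]; exact hz.coeff_natDegree
  rw [this, one_mul, Nat.cast_sub hn]
  push_cast
  ring

lemma deriv_natDegree {z : Polynomial ℂ} (hz : z.Monic) {n : ℕ} (hn : 1 ≤ n)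
    (hd : z.natDegree = n) : (Polynomial.derivative z).natDegree = n - 1 := by
  apply le_antisymm
  · apply Polynomial.natDegree_le_iff_coeff_eq_zero.mpr
    intro N hN
    rw [Polynomial.coeff_derivative]
    have : z.coeff (N+1) = 0 := by
      apply Polynomial.coeff_eq_zero_of_natDegree_lt; omega
    rw [this, zero_mul]
  · apply Polynomial.le_natDegree_of_ne_zero
    rw [deriv_coeff hz hn hd]
    exact_mod_cast Nat.cast_ne_zero.mpr (by omega)

lemma deriv_ne_zero {z : Polynomial ℂ} (hz : z.Monic) {n : ℕ} (hn : 1 ≤ n)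
    (hd : z.natDegree = n) : Polynomial.derivative z ≠ 0 := by
  intro h
  have := deriv_coeff hz hn hd
  rw [h, Polynomial.coeff_zero] at this
  exact (Nat.cast_ne_zero.mpr (by omega : n ≠ 0)) this.symm

lemma deriv_leadingCoeff {z : Polynomial ℂ} (hz : z.Monic) {n : ℕ} (hn : 1 ≤ n)
    (hd : z.natDegree = n) : (Polynomial.derivative z).leadingCoeff = (n : ℂ) := by
  rw [Polynomial.leadingCoeff, deriv_natDegree hz hn hd, deriv_coeff hz hn hd]

/-- Lemma A : a monic reduced polynomial whose derivative divides its square is Xⁿ. -/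
lemma lemA {z : Polynomial ℂ} (hz : z.Monic) {n : ℕ} (hn : 1 ≤ n) (hd : z.natDegree = n)
    (hred : z.coeff (n-1) = 0) (hdvd : Polynomial.derivative z ∣ z * z) :
    z = Polynomial.X ^ n := by
  classical
  have hz0 : z ≠ 0 := hz.ne_zero
  have hsplit : z.Splits := IsAlgClosed.splits z
  have hcard : z.roots.card = n := by rw [Polynomial.splits_iff_card_roots.mp hsplit, hd]
  set z' := Polynomial.derivative z with hz'def
  have hz'0 : z' ≠ 0 := deriv_ne_zero hz hn hd
  have hz'deg : z'.natDegree = n - 1 := deriv_natDegree hz hn hd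
  have hsplit' : z'.Splits := IsAlgClosed.splits z'
  have hcard' : z'.roots.card = n - 1 := by
    rw [Polynomial.splits_iff_card_roots.mp hsplit', hz'deg]
  have hroots' : ∀ ξ : ℂ, ξ ∈ z'.roots → z.IsRoot ξ := by
    intro ξ hξ
    obtain ⟨c, hc⟩ := hdvd
    have h1 : z'.IsRoot ξ := (Polynomial.mem_roots hz'0).mp hξ
    have h2 : (z * z).eval ξ = 0 := by
      rw [hc, Polynomial.eval_mul, h1.eq_zero, zero_mul]
    rw [Polynomial.eval_mul] at h2
    exact mul_self_eq_zero.mp h2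
  set t := z.roots.toFinset with ht
  have hsubset : z'.roots.toFinset ⊆ t := by
    intro ξ hξ
    rw [Multiset.mem_toFinset] at hξ
    rw [ht, Multiset.mem_toFinset, Polynomial.mem_roots hz0]
    exact hroots' ξ hξ
  have hcount : ∀ ξ ∈ t, z'.roots.count ξ = z.roots.count ξ - 1 := by
    intro ξ hξ
    rw [Multiset.mem_toFinset, Polynomial.mem_roots hz0] at hξ
    rw [Polynomial.count_roots, Polynomial.count_roots, hz'def,
      Polynomial.derivative_rootMultiplicity_of_root hξ]
  have hsum' : ∑ ξ ∈ t, z'.roots.count ξ = n - 1 := by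
    rw [← hcard']
    rw [← Multiset.toFinset_sum_count_eq z'.roots]
    exact (Finset.sum_subset hsubset (fun x _ hx => by
      rwa [Multiset.count_eq_zero, ← Multiset.mem_toFinset])).symm
  have hsum : ∑ ξ ∈ t, z.roots.count ξ = n := by
    rw [← hcard, ht, Multiset.toFinset_sum_count_eq]
  have hone : ∀ ξ ∈ t, 1 ≤ z.roots.count ξ := by
    intro ξ hξ
    rw [Multiset.one_le_count_iff_mem]
    rwa [Multiset.mem_toFinset] at hξ
  have hcardt : t.card = 1 := by
    have h3 : ∑ ξ ∈ t, (z'.roots.count ξ + 1) = ∑ ξ ∈ t, z.roots.count ξ := by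
      apply Finset.sum_congr rfl
      intro ξ hξ
      rw [hcount ξ hξ]
      have := hone ξ hξ
      omega
    rw [Finset.sum_add_distrib, hsum', hsum, Finset.sum_const, smul_eq_mul, mul_one] at h3
    omega
  obtain ⟨ξ, hξ⟩ := Finset.card_eq_one.mp hcardt
  have hrep : z.roots = Multiset.replicate n ξ := by
    apply Multiset.eq_replicate.mpr
    refine ⟨hcard, fun b hb => ?_⟩
    have : b ∈ t := by rw [ht, Multiset.mem_toFinset]; exact hb
    rw [hξ, Finset.mem_singleton] at this
    exact this
  have hnext : z.nextCoeff = -(z.roots.sum) :=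
    hsplit.nextCoeff_eq_neg_sum_roots_of_monic hz
  have hnext0 : z.nextCoeff = 0 := by
    rw [Polynomial.nextCoeff_of_natDegree_pos (by omega : 0 < z.natDegree), hd]
    exact hred
  have hξ0 : ξ = 0 := by
    rw [hnext0, hrep, Multiset.sum_replicate, nsmul_eq_mul] at hnext
    have : (n : ℂ) * ξ = 0 := neg_eq_zero.mp hnext.symm
    rcases mul_eq_zero.mp this with h | h
    · exact absurd h (Nat.cast_ne_zero.mpr (by omega))
    · exact h
  have := hsplit.eq_prod_roots_of_monic hz
  rw [hrep, hξ0, Multiset.map_replicate, Multiset.prod_replicate, map_zero, sub_zero] at this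
  exact this


lemma coeff_map_Zg (x : Sig n → ℂ) (k : ℕ) :
    ((Zg n).map (MvPolynomial.eval x)).coeff k = MvPolynomial.eval x (zc n k) := by
  rw [Polynomial.coeff_map, coeff_Zg]

lemma coeff_map_Qg (x : Sig n → ℂ) (k : ℕ) :
    ((Qg n).map (MvPolynomial.eval x)).coeff k = MvPolynomial.eval x (qc n k) := by
  rw [Polynomial.coeff_map, coeff_Qg]

lemma map_Eg (x : Sig n → ℂ) :
    (Eg n).map (MvPolynomial.eval x) =
      (Zg n).map (MvPolynomial.eval x) * (Zg n).map (MvPolynomial.eval x) -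
        (Qg n).map (MvPolynomial.eval x) *
          Polynomial.derivative ((Zg n).map (MvPolynomial.eval x)) := by
  rw [Eg, Polynomial.map_sub, Polynomial.map_mul, Polynomial.map_mul, Polynomial.derivative_map]

lemma zmap_coeff_n (x : Sig n → ℂ) : ((Zg n).map (MvPolynomial.eval x)).coeff n = 1 := by
  rw [coeff_map_Zg, zc, if_pos rfl, map_one]

lemma zmap_natDegree_le (x : Sig n → ℂ) : ((Zg n).map (MvPolynomial.eval x)).natDegree ≤ n := by
  apply Polynomial.natDegree_le_iff_coeff_eq_zero.mpr
  intro N hN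
  rw [coeff_map_Zg, zc, if_neg (by omega), dif_neg (by omega), map_zero]

lemma zmap_monic (x : Sig n → ℂ) : ((Zg n).map (MvPolynomial.eval x)).Monic :=
  Polynomial.monic_of_natDegree_le_of_coeff_eq_one n (zmap_natDegree_le n x) (zmap_coeff_n n x)

lemma zmap_natDegree (x : Sig n → ℂ) : ((Zg n).map (MvPolynomial.eval x)).natDegree = n :=
  le_antisymm (zmap_natDegree_le n x)
    (Polynomial.le_natDegree_of_ne_zero (by rw [zmap_coeff_n]; exact one_ne_zero))

lemma qmap_coeff_top (x : Sig n → ℂ) :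
    ((Qg n).map (MvPolynomial.eval x)).coeff (n+1) = (n : ℂ)⁻¹ := by
  rw [coeff_map_Qg, qc, if_pos rfl, MvPolynomial.eval_C]

lemma qmap_natDegree_le (x : Sig n → ℂ) : ((Qg n).map (MvPolynomial.eval x)).natDegree ≤ n+1 := by
  apply Polynomial.natDegree_le_iff_coeff_eq_zero.mpr
  intro N hN
  rw [coeff_map_Qg, qc, if_neg (by omega), dif_neg (by omega), map_zero]

lemma qmap_natDegree (hn : 2 ≤ n) (x : Sig n → ℂ) :
    ((Qg n).map (MvPolynomial.eval x)).natDegree = n+1 :=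
  le_antisymm (qmap_natDegree_le n x)
    (Polynomial.le_natDegree_of_ne_zero (by
      rw [qmap_coeff_top]
      exact inv_ne_zero (Nat.cast_ne_zero.mpr (by omega))))

lemma commonzero (hn : 2 ≤ n) (x : Sig n → ℂ)
    (hx : ∀ m, m < 2*n → MvPolynomial.eval x ((Eg n).coeff m) = 0) : x = 0 := by
  have hn0 : (n : ℂ) ≠ 0 := Nat.cast_ne_zero.mpr (by omega)
  set z := (Zg n).map (MvPolynomial.eval x) with hzdef
  set q := (Qg n).map (MvPolynomial.eval x) with hqdef
  have hzmonic : z.Monic := zmap_monic n x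
  have hzdeg : z.natDegree = n := zmap_natDegree n x
  have hqtop : q.coeff (n+1) = (n : ℂ)⁻¹ := qmap_coeff_top n x
  have hqdeg : q.natDegree = n+1 := qmap_natDegree n hn x
  have hqlead : q.leadingCoeff = (n:ℂ)⁻¹ := by rw [Polynomial.leadingCoeff, hqdeg, hqtop]
  have hz'deg : (Polynomial.derivative z).natDegree = n - 1 :=
    deriv_natDegree hzmonic (by omega) hzdeg
  have hz'lead : (Polynomial.derivative z).leadingCoeff = (n : ℂ) :=
    deriv_leadingCoeff hzmonic (by omega) hzdeg
  have hW : (Eg n).map (MvPolynomial.eval x) = z*z - q*(Polynomial.derivative z) := map_Eg n x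
  have hW0 : (Eg n).map (MvPolynomial.eval x) = 0 := by
    ext m
    rw [Polynomial.coeff_zero, Polynomial.coeff_map]
    rcases lt_trichotomy m (2*n) with h | h | h
    · exact hx m h
    · subst h
      rw [← Polynomial.coeff_map, hW, Polynomial.coeff_sub]
      have e1 : (z*z).coeff (2*n) = 1 := by
        have h1 := Polynomial.coeff_mul_degree_add_degree z z
        rw [hzdeg, hzmonic.leadingCoeff, mul_one] at h1
        have h2 : n + n = 2*n := by omega
        rwa [h2] at h1
      have e2 : (q*(Polynomial.derivative z)).coeff (2*n) = 1 := by
        have h1 := Polynomial.coeff_mul_degree_add_degree q (Polynomial.derivative z)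
        rw [hqdeg, hz'deg, hqlead, hz'lead, inv_mul_cancel₀ hn0] at h1
        have h2 : n + 1 + (n - 1) = 2*n := by omega
        rwa [h2] at h1
      rw [e1, e2, sub_self]
    · rw [(Gr_Eg n hn m).2 h, map_zero]
  have hzz : z * z = q * Polynomial.derivative z := by
    rw [hW] at hW0
    exact sub_eq_zero.mp hW0
  have hdvd : Polynomial.derivative z ∣ z * z := ⟨q, by rw [hzz]; ring⟩
  have hred : z.coeff (n-1) = 0 := by
    rw [hzdef, coeff_map_Zg, zc, if_neg (by omega), dif_neg (by omega), map_zero]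
  have hzX : z = Polynomial.X ^ n := lemA hzmonic (by omega) hzdeg hred hdvd
  have hq' : q = Polynomial.X^(n+1) * Polynomial.C ((n:ℂ)⁻¹) := by
    have h1 : q * (Polynomial.C (n:ℂ) * Polynomial.X ^ (n-1)) =
        Polynomial.X^(n+1) * Polynomial.X^(n-1) := by
      have hxp : (Polynomial.X : Polynomial ℂ)^(n+1) * Polynomial.X^(n-1) =
          Polynomial.X^n * Polynomial.X^n := by
        rw [← pow_add, ← pow_add]
        congr 1
        omega
      rw [hxp, ← Polynomial.derivative_X_pow, ← hzX]
      exact hzz.symm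
    have h2 : q * Polynomial.C (n:ℂ) = Polynomial.X^(n+1) := by
      apply mul_right_cancel₀ (pow_ne_zero (n-1) Polynomial.X_ne_zero)
      rw [← h1]; ring
    calc q = q * Polynomial.C (n:ℂ) * Polynomial.C ((n:ℂ)⁻¹) := by
            rw [mul_assoc, ← Polynomial.C_mul, mul_inv_cancel₀ hn0, Polynomial.C_1, mul_one]
      _ = Polynomial.X^(n+1) * Polynomial.C ((n:ℂ)⁻¹) := by rw [h2]
  funext s
  rcases s with i | j
  · show x (Sum.inl i) = 0
    have hi : i.1 ≤ n - 2 := by have := i.isLt; omega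
    have hzi : z.coeff (n-2-i.1) = MvPolynomial.eval x (zc n (n-2-i.1)) := by
      rw [hzdef, coeff_map_Zg]
    rw [zc, if_neg (by omega), dif_pos ⟨by omega, hn⟩, MvPolynomial.eval_X] at hzi
    have hfin : (⟨n-2-(n-2-i.1), by omega⟩ : Fin (n-1)) = i :=
      Fin.ext (show n-2-(n-2-i.1) = i.1 by omega)
    rw [hfin] at hzi
    rw [hzX, Polynomial.coeff_X_pow, if_neg (by omega)] at hzi
    exact hzi.symm
  · show x (Sum.inr j) = 0
    have hj : j.1 ≤ n := by have := j.isLt; omega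
    have hqj : q.coeff j.1 = MvPolynomial.eval x (qc n j.1) := by
      rw [hqdef, coeff_map_Qg]
    rw [qc, if_neg (by omega), dif_pos hj, MvPolynomial.eval_X] at hqj
    have hfin : (⟨j.1, by omega⟩ : Fin (n+1)) = j := Fin.ext rfl
    rw [hfin] at hqj
    rw [hq', Polynomial.coeff_mul_C, Polynomial.coeff_X_pow, if_neg (by omega), zero_mul] at hqj
    exact hqj.symm


def Jideal : Ideal (Rg n) :=
  Ideal.span (Set.range (fun m : Fin (2*n) => (Eg n).coeff m.1))

def Igens : Set (Rg n) :=
  insert ((Eg n).coeff 0 - 1) ((fun m => (Eg n).coeff m) '' (Set.Ico 1 (2*n)))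

def Iideal : Ideal (Rg n) := Ideal.span (Igens n)

def Tset : Set (Sig n → ℂ) := {x | ∀ f ∈ Igens n, MvPolynomial.eval x f = 0}

lemma X_mem_radical (hn : 2 ≤ n) (s : Sig n) :
    MvPolynomial.X s ∈ (Jideal n).radical := by
  rw [← MvPolynomial.vanishingIdeal_zeroLocus_eq_radical (K := ℂ)]
  rw [MvPolynomial.mem_vanishingIdeal_iff]
  intro x hx
  rw [MvPolynomial.aeval_X]
  have hx0 : x = 0 := by
    apply commonzero n hn x
    intro m hm
    have := hx _ (Ideal.subset_span ⟨⟨m, hm⟩, rfl⟩)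
    simpa [MvPolynomial.coe_aeval_eq_eval] using this
  rw [hx0]
  rfl

lemma comp_mul_homog {d D : ℕ} {F : Rg n} (hF : F.IsWeightedHomogeneous (wt n) d) (c : Rg n) :
    weightedHomogeneousComponent (wt n) D (c * F) =
      if d ≤ D then (weightedHomogeneousComponent (wt n) (D - d) c) * F else 0 := by
  induction c using MvPolynomial.induction_on' with
  | monomial u a =>
    have hmon : (MvPolynomial.monomial u a : Rg n).IsWeightedHomogeneous (wt n)
        (Finsupp.weight (wt n) u) := isWeightedHomogeneous_monomial _ _ _ rfl
    have hprod := hmon.mul hF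
    by_cases hdD : d ≤ D
    · rw [if_pos hdD]
      by_cases hu : Finsupp.weight (wt n) u + d = D
      · rw [← hu, hprod.weightedHomogeneousComponent_same, Nat.add_sub_cancel,
          (isWeightedHomogeneous_monomial (wt n) u a rfl).weightedHomogeneousComponent_same]
      · rw [hprod.weightedHomogeneousComponent_ne D (fun h => hu h.symm),
          (isWeightedHomogeneous_monomial (wt n) u a rfl).weightedHomogeneousComponent_ne (D - d)
            (by intro h; apply hu; omega), zero_mul]
    · rw [if_neg hdD]
      exact hprod.weightedHomogeneousComponent_ne D (by omega)
  | add p q ihp ihq =>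
    rw [add_mul, map_add, ihp, ihq, map_add]
    split_ifs
    · rw [add_mul]
    · rw [add_zero]

lemma exists_homog_rep (hn : 2 ≤ n) (s : Sig n) :
    ∃ (N : ℕ) (h : Fin (2*n) → Rg n),
      ((MvPolynomial.X s : Rg n)^N = ∑ m : Fin (2*n), h m * (Eg n).coeff m.1) ∧
      ∀ m : Fin (2*n), h m = 0 ∨
        ((h m).IsWeightedHomogeneous (wt n) (N * wt n s - (2*n - m.1)) ∧
          (2*n - m.1) ≤ N * wt n s) := by
  obtain ⟨N, hN⟩ := Ideal.mem_radical_iff.mp (X_mem_radical n hn s)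
  rw [Jideal, Ideal.mem_span_range_iff_exists_fun] at hN
  obtain ⟨c, hc⟩ := hN
  set D := N * wt n s with hD
  have hXN : ((MvPolynomial.X s : Rg n)^N).IsWeightedHomogeneous (wt n) D := by
    rw [MvPolynomial.X_pow_eq_monomial]
    apply isWeightedHomogeneous_monomial
    rw [Finsupp.weight_apply, Finsupp.sum_single_index]
    · rw [smul_eq_mul]
    · rw [zero_smul]
  refine ⟨N, fun m => if (2*n - m.1) ≤ D
      then weightedHomogeneousComponent (wt n) (D - (2*n - m.1)) (c m) else 0, ?_, ?_⟩
  · conv_lhs => rw [← hXN.weightedHomogeneousComponent_same]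
    rw [← hc, map_sum]
    apply Finset.sum_congr rfl
    intro m _
    rw [comp_mul_homog n (hom_Eg n hn m.1) (c m)]
    dsimp only
    split_ifs with h
    · rfl
    · rw [zero_mul]
  · intro m
    dsimp only
    split_ifs with h
    · exact Or.inr ⟨weightedHomogeneousComponent_isWeightedHomogeneous _ _, h⟩
    · exact Or.inl rfl


lemma wt_pos (s : Sig n) : 1 ≤ wt n s := by
  rcases s with i | j
  · simp [wt]
  · have := j.isLt
    simp only [wt, Sum.elim_inr]
    omega

lemma wsingle (s : Sig n) (k : ℕ) :
    Finsupp.weight (wt n) (Finsupp.single s k) = k * wt n s := by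
  rw [Finsupp.weight_apply, Finsupp.sum_single_index]
  · rw [smul_eq_mul]
  · rw [zero_smul]

lemma quot_module_finite (hn : 2 ≤ n) : Module.Finite ℂ (Rg n ⧸ Iideal n) := by
  classical
  choose N h hrep hhom using exists_homog_rep n hn
  set W0 := ∑ s : Sig n, N s * wt n s with hW0
  set SmallSet : Set (Rg n) :=
    {f | ∃ μ : Sig n →₀ ℕ, Finsupp.weight (wt n) μ ≤ W0 ∧ f = MvPolynomial.monomial μ 1}
    with hSS
  set M : Submodule ℂ (Rg n) :=
    Submodule.span ℂ SmallSet ⊔ (Submodule.restrictScalars ℂ (Iideal n)) with hM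
  have hmono : ∀ d (μ : Sig n →₀ ℕ), Finsupp.weight (wt n) μ ≤ d →
      (MvPolynomial.monomial μ (1:ℂ)) ∈ M := by
    intro d
    induction d using Nat.strong_induction_on with
    | _ d ih =>
    intro μ hμ
    by_cases hsmall : Finsupp.weight (wt n) μ ≤ W0
    · exact Submodule.mem_sup_left (Submodule.subset_span ⟨μ, hsmall, rfl⟩)
    push_neg at hsmall
    have hIWH_in : ∀ (g : Rg n) (e : ℕ), e < d → g.IsWeightedHomogeneous (wt n) e → g ∈ M := by
      intro g e he hg
      rw [← MvPolynomial.support_sum_monomial_coeff g]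
      apply Submodule.sum_mem
      intro ν hν
      have hw : Finsupp.weight (wt n) ν = e := hg (MvPolynomial.mem_support_iff.mp hν)
      have heq : MvPolynomial.monomial ν (MvPolynomial.coeff ν g)
          = (MvPolynomial.coeff ν g) • MvPolynomial.monomial ν (1:ℂ) := by
        rw [MvPolynomial.smul_monomial, smul_eq_mul, mul_one]
      rw [heq]
      exact Submodule.smul_mem _ _ (ih e he ν (le_of_eq hw))
    have hex : ∃ s, N s ≤ μ s := by
      by_contra hcon
      push_neg at hcon
      have h1 : Finsupp.weight (wt n) μ = ∑ i ∈ μ.support, μ i * wt n i := by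
        rw [Finsupp.weight_apply, Finsupp.sum]
        apply Finset.sum_congr rfl
        intros
        rw [smul_eq_mul]
      have h2 : ∑ i ∈ μ.support, μ i * wt n i ≤ ∑ i : Sig n, μ i * wt n i :=
        Finset.sum_le_sum_of_subset (Finset.subset_univ _)
      have h3 : ∑ i : Sig n, μ i * wt n i ≤ W0 := by
        rw [hW0]
        apply Finset.sum_le_sum
        intro i _
        exact Nat.mul_le_mul_right _ (le_of_lt (hcon i))
      omega
    obtain ⟨s, hs⟩ := hex
    set μ' := μ - Finsupp.single s (N s) with hμ'
    have hadd : μ' + Finsupp.single s (N s) = μ := by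
      ext a
      rw [Finsupp.add_apply, hμ', Finsupp.tsub_apply]
      by_cases ha : s = a
      · subst ha
        rw [Finsupp.single_eq_same]
        omega
      · rw [Finsupp.single_eq_of_ne' ha]
        omega
    have hmonsplit : MvPolynomial.monomial μ (1:ℂ) =
        MvPolynomial.monomial μ' 1 * (MvPolynomial.X s)^(N s) := by
      rw [MvPolynomial.X_pow_eq_monomial, MvPolynomial.monomial_mul, mul_one, hadd]
    set A := MvPolynomial.monomial μ' (1:ℂ) with hA
    set z0 : Fin (2*n) := ⟨0, by omega⟩ with hz0
    have hImem : MvPolynomial.monomial μ (1:ℂ) - A * h s z0 ∈ Iideal n := by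
      have hsplit : ((MvPolynomial.X s : Rg n))^(N s) =
          ∑ m ∈ Finset.univ.erase z0, h s m * (Eg n).coeff m.1 + h s z0 * (Eg n).coeff z0.1 := by
        rw [hrep s, ← Finset.sum_erase_add _ _ (Finset.mem_univ z0)]
      rw [hmonsplit, hsplit, mul_add, Finset.mul_sum]
      have hring : (∑ m ∈ Finset.univ.erase z0, A * (h s m * (Eg n).coeff m.1))
            + A * (h s z0 * (Eg n).coeff z0.1) - A * h s z0
          = (∑ m ∈ Finset.univ.erase z0, A * (h s m * (Eg n).coeff m.1))
            + (A * h s z0) * ((Eg n).coeff z0.1 - 1) := by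
        ring
      rw [hring]
      apply Ideal.add_mem
      · apply Ideal.sum_mem
        intro m hm
        have hm1 : 1 ≤ m.1 := by
          rcases Nat.eq_zero_or_pos m.1 with h0 | h1
          · exact absurd (Fin.ext h0 : m = z0) (Finset.ne_of_mem_erase hm)
          · exact h1
        apply Ideal.mul_mem_left
        apply Ideal.mul_mem_left
        apply Ideal.subset_span
        exact Set.mem_insert_iff.mpr (Or.inr ⟨m.1, ⟨hm1, m.2⟩, rfl⟩)
      · apply Ideal.mul_mem_left
        apply Ideal.subset_span
        exact Set.mem_insert _ _
    have hBM : A * h s z0 ∈ M := by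
      rcases hhom s z0 with h0 | ⟨hIWH, hle⟩
      · rw [h0, mul_zero]
        exact Submodule.zero_mem M
      · apply hIWH_in _ (Finsupp.weight (wt n) μ' + (N s * wt n s - (2*n - z0.1)))
        · have hwadd : Finsupp.weight (wt n) μ' + N s * wt n s = Finsupp.weight (wt n) μ := by
            rw [← hadd, map_add, wsingle]
          have hz0' : 2*n - z0.1 = 2*n := rfl
          rw [hz0'] at hle ⊢
          omega
        · exact (isWeightedHomogeneous_monomial (wt n) μ' 1 rfl).mul hIWH
    have hfinal := Submodule.add_mem M (Submodule.mem_sup_right hImem) hBM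
    rwa [sub_add_cancel] at hfinal
  have hMtop : M = ⊤ := by
    rw [eq_top_iff]
    intro f _
    rw [← MvPolynomial.support_sum_monomial_coeff f]
    apply Submodule.sum_mem
    intro ν _
    have heq : MvPolynomial.monomial ν (MvPolynomial.coeff ν f)
        = (MvPolynomial.coeff ν f) • MvPolynomial.monomial ν (1:ℂ) := by
      rw [MvPolynomial.smul_monomial, smul_eq_mul, mul_one]
    rw [heq]
    exact Submodule.smul_mem _ _ (hmono (Finsupp.weight (wt n) ν) ν le_rfl)
  have hSfin : SmallSet.Finite := by
    have hμfin : {μ : Sig n →₀ ℕ | Finsupp.weight (wt n) μ ≤ W0}.Finite := by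
      have hsub : {μ : Sig n →₀ ℕ | Finsupp.weight (wt n) μ ≤ W0} ⊆
          (fun g : Sig n →₀ ℕ => (g : Sig n → ℕ)) ⁻¹' {g : Sig n → ℕ | ∀ s, g s ≤ W0} := by
        intro μ hμ s
        refine le_trans (Finsupp.le_weight (wt n) ?_ μ) hμ
        have := wt_pos n s
        omega
      apply Set.Finite.subset ?_ hsub
      apply Set.Finite.preimage (Set.injOn_of_injective (DFunLike.coe_injective))
      exact Set.Finite.pi' (fun s => Set.finite_Iic W0)
    apply Set.Finite.subset (Set.Finite.image (fun μ => MvPolynomial.monomial μ (1:ℂ)) hμfin)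
    rintro f ⟨μ, hμ, rfl⟩
    exact ⟨μ, hμ, rfl⟩
  have hspan : Submodule.span ℂ ((Ideal.Quotient.mkₐ ℂ (Iideal n)) '' SmallSet) = ⊤ := by
    have himg : (Ideal.Quotient.mkₐ ℂ (Iideal n)) '' SmallSet
        = (Ideal.Quotient.mkₐ ℂ (Iideal n)).toLinearMap '' SmallSet := rfl
    rw [himg, ← Submodule.map_span]
    rw [eq_top_iff]
    intro y _
    obtain ⟨f, rfl⟩ := Ideal.Quotient.mkₐ_surjective ℂ (Iideal n) y
    have hf : f ∈ M := by rw [hMtop]; trivial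
    rcases Submodule.mem_sup.mp hf with ⟨v, hv, i, hi, rfl⟩
    rw [map_add]
    have hi0 : (Ideal.Quotient.mkₐ ℂ (Iideal n)) i = 0 := Ideal.Quotient.eq_zero_iff_mem.mpr hi
    rw [hi0, add_zero]
    exact Submodule.mem_map_of_mem hv
  refine ⟨⟨(hSfin.image (Ideal.Quotient.mkₐ ℂ (Iideal n))).toFinset, ?_⟩⟩
  rw [Set.Finite.coe_toFinset]
  exact hspan


lemma eval_Iideal (x : Sig n → ℂ) (hx : x ∈ Tset n) :
    ∀ g ∈ Iideal n, MvPolynomial.eval x g = 0 := by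
  intro g hg
  have hle : Iideal n ≤ RingHom.ker (MvPolynomial.eval x) := by
    rw [Iideal, Ideal.span_le]
    intro f hf
    rw [SetLike.mem_coe, RingHom.mem_ker]
    exact hx f hf
  exact RingHom.mem_ker.mp (hle hg)

lemma coord_poly (hn : 2 ≤ n) (s : Sig n) :
    ∃ p : Polynomial ℂ, p ≠ 0 ∧ ∀ x ∈ Tset n, Polynomial.eval (x s) p = 0 := by
  classical
  have hfin : Module.Finite ℂ (Rg n ⧸ Iideal n) := quot_module_finite n hn
  have hnli : ¬ LinearIndependent ℂ
      (fun j : ℕ => (Ideal.Quotient.mkₐ ℂ (Iideal n)) ((MvPolynomial.X s)^j)) :=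
    Module.Finite.not_linearIndependent_of_infinite _
  rw [linearIndependent_iff] at hnli
  push_neg at hnli
  obtain ⟨l, hl0, hlne⟩ := hnli
  refine ⟨∑ j ∈ l.support, Polynomial.C (l j) * Polynomial.X ^ j, ?_, ?_⟩
  · obtain ⟨j0, hj0⟩ := Finsupp.support_nonempty_iff.mpr hlne
    intro hp0
    have hcc : (∑ j ∈ l.support, Polynomial.C (l j) * Polynomial.X ^ j).coeff j0 = l j0 := by
      rw [Polynomial.finset_sum_coeff, Finset.sum_eq_single j0]
      · rw [Polynomial.coeff_C_mul, Polynomial.coeff_X_pow, if_pos rfl, mul_one]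
      · intro b _ hb
        rw [Polynomial.coeff_C_mul, Polynomial.coeff_X_pow, if_neg (fun hh => hb hh.symm),
          mul_zero]
      · intro hj
        exact absurd hj0 hj
    rw [hp0, Polynomial.coeff_zero] at hcc
    exact (Finsupp.mem_support_iff.mp hj0) hcc.symm
  · intro x hx
    set g : Rg n := ∑ j ∈ l.support, MvPolynomial.C (l j) * (MvPolynomial.X s)^j with hg
    have hgI : g ∈ Iideal n := by
      have hQ : (Ideal.Quotient.mkₐ ℂ (Iideal n)) g = 0 := by
        rw [hg, map_sum, ← hl0, Finsupp.linearCombination_apply, Finsupp.sum]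
        apply Finset.sum_congr rfl
        intro j _
        rw [← MvPolynomial.smul_eq_C_mul, map_smul]
      rwa [Ideal.Quotient.mkₐ_eq_mk, Ideal.Quotient.eq_zero_iff_mem] at hQ
    have heval : MvPolynomial.eval x g = 0 := eval_Iideal n x hx g hgI
    have hevv : MvPolynomial.eval x g =
        Polynomial.eval (x s) (∑ j ∈ l.support, Polynomial.C (l j) * Polynomial.X ^ j) := by
      rw [hg, map_sum, Polynomial.eval_finset_sum]
      apply Finset.sum_congr rfl
      intro j _
      rw [map_mul, map_pow, MvPolynomial.eval_C, MvPolynomial.eval_X,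
        Polynomial.eval_mul, Polynomial.eval_C, Polynomial.eval_pow, Polynomial.eval_X]
    rw [← hevv]
    exact heval

lemma T_finite (hn : 2 ≤ n) : (Tset n).Finite := by
  choose p hp0 hproot using coord_poly n hn
  have hsub : Tset n ⊆ {x : Sig n → ℂ | ∀ s, x s ∈ {y | (p s).IsRoot y}} :=
    fun x hx s => hproot s x hx
  exact Set.Finite.subset (Set.Finite.pi' (fun s => Polynomial.finite_setOf_isRoot (hp0 s))) hsub

lemma main_ge2 (hn : 2 ≤ n) :
    {z : Polynomial ℂ | z.Monic ∧ z.natDegree = n ∧ z.coeff (n - 1) = 0 ∧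
      Polynomial.derivative z ∣ z ^ 2 - 1}.Finite := by
  apply Set.Finite.subset
    (Set.Finite.image (fun x : Sig n → ℂ => (Zg n).map (MvPolynomial.eval x)) (T_finite n hn))
  rintro z ⟨hmon, hdeg, hred, hdvd⟩
  have hn0 : (n : ℂ) ≠ 0 := Nat.cast_ne_zero.mpr (by omega)
  obtain ⟨c, hc⟩ := hdvd
  have hz'deg : (Polynomial.derivative z).natDegree = n - 1 :=
    deriv_natDegree hmon (by omega) hdeg
  have hz'lead : (Polynomial.derivative z).leadingCoeff = (n : ℂ) :=
    deriv_leadingCoeff hmon (by omega) hdeg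
  have hz'0 : Polynomial.derivative z ≠ 0 := deriv_ne_zero hmon (by omega) hdeg
  have h2m : (z ^ 2).Monic := hmon.pow 2
  have h2degp : (z ^ 2).natDegree = 2 * n := by
    rw [Polynomial.natDegree_pow, hdeg]
  have h2deg : (z ^ 2 - 1 : Polynomial ℂ).natDegree = 2 * n := by
    have h1 : (z ^ 2 - 1 : Polynomial ℂ) = z ^ 2 - Polynomial.C 1 := by rw [map_one]
    rw [h1, Polynomial.natDegree_sub_C, h2degp]
  have hzz0 : (z ^ 2 - 1 : Polynomial ℂ) ≠ 0 := by
    intro h0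
    rw [h0, Polynomial.natDegree_zero] at h2deg
    omega
  have hc0 : c ≠ 0 := by
    intro h0
    rw [h0, mul_zero] at hc
    exact hzz0 hc
  have hcdeg : c.natDegree = n + 1 := by
    have := congrArg Polynomial.natDegree hc
    rw [h2deg, Polynomial.natDegree_mul hz'0 hc0, hz'deg] at this
    omega
  have hl1 : (z ^ 2 - 1 : Polynomial ℂ).leadingCoeff = 1 := by
    rw [Polynomial.leadingCoeff, h2deg, Polynomial.coeff_sub, Polynomial.coeff_one,
      if_neg (by omega), sub_zero, ← h2degp]
    exact h2m.coeff_natDegree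
  have hclead : c.leadingCoeff = (n : ℂ)⁻¹ := by
    have := congrArg Polynomial.leadingCoeff hc
    rw [hl1, Polynomial.leadingCoeff_mul, hz'lead] at this
    apply mul_left_cancel₀ hn0
    rw [← this, mul_inv_cancel₀ hn0]
  have hctop : c.coeff (n+1) = (n : ℂ)⁻¹ := by
    rw [← hcdeg]
    rw [← Polynomial.leadingCoeff]
    exact hclead
  set x : Sig n → ℂ := Sum.elim (fun i => z.coeff (n-2-i.1)) (fun j => c.coeff j.1) with hx
  have hmapZ : (Zg n).map (MvPolynomial.eval x) = z := by
    ext k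
    rw [coeff_map_Zg, zc]
    split_ifs with h1 h2
    · rw [map_one, h1, ← hdeg]
      exact hmon.coeff_natDegree.symm
    · rw [MvPolynomial.eval_X, hx, Sum.elim_inl]
      show z.coeff (n - 2 - (n - 2 - k)) = z.coeff k
      congr 1
      omega
    · rw [map_zero]
      by_cases hk : k = n - 1
      · rw [hk, hred]
      · rw [Polynomial.coeff_eq_zero_of_natDegree_lt]
        rw [hdeg]
        omega
  have hmapQ : (Qg n).map (MvPolynomial.eval x) = c := by
    ext k
    rw [coeff_map_Qg, qc]
    split_ifs with h1 h2
    · rw [MvPolynomial.eval_C, h1]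
      exact hctop.symm
    · rw [MvPolynomial.eval_X, hx, Sum.elim_inr]
    · rw [map_zero]
      exact (Polynomial.coeff_eq_zero_of_natDegree_lt (by rw [hcdeg]; omega)).symm
  have hmapE : (Eg n).map (MvPolynomial.eval x) = 1 := by
    rw [map_Eg, hmapZ, hmapQ]
    linear_combination hc
  refine ⟨x, ?_, hmapZ⟩
  intro f hf
  rcases Set.mem_insert_iff.mp hf with rfl | ⟨m, hm, rfl⟩
  · rw [map_sub, map_one]
    have hcm : MvPolynomial.eval x ((Eg n).coeff 0) = ((Eg n).map (MvPolynomial.eval x)).coeff 0 :=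
      (Polynomial.coeff_map _ _).symm
    rw [hcm, hmapE, Polynomial.coeff_one, if_pos rfl, sub_self]
  · have hcm : MvPolynomial.eval x ((Eg n).coeff m) = ((Eg n).map (MvPolynomial.eval x)).coeff m :=
      (Polynomial.coeff_map _ _).symm
    rw [hcm, hmapE, Polynomial.coeff_one, if_neg (by have := hm.1; omega)]

end
end Admissible

open Polynomial

theorem admissible_polynomials_finite (n : ℕ) :
    {z : Polynomial ℂ | z.Monic ∧ z.natDegree = n ∧ z.coeff (n - 1) = 0 ∧
      Polynomial.derivative z ∣ z ^ 2 - 1}.Finite := by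
  rcases Nat.lt_or_ge n 2 with hn | hn
  · interval_cases n
    · apply Set.Finite.subset Set.finite_empty
      rintro z ⟨hmon, hdeg, hred, -⟩
      exfalso
      have h1 := hmon.coeff_natDegree
      rw [hdeg] at h1
      rw [Nat.zero_sub, h1] at hred
      exact one_ne_zero hred
    · apply Set.Finite.subset (Set.finite_singleton (Polynomial.X : Polynomial ℂ))
      rintro z ⟨hmon, hdeg, hred, -⟩
      have hz := hmon.eq_X_add_C hdeg
      rw [Set.mem_singleton_iff, hz, show z.coeff 0 = 0 from hred, map_zero, add_zero]
  · exact Admissible.main_ge2 n hn
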